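/- Let P be a d×d real symmetric orthogonal projection matrix of rank k (so P² = P = Pᵀ, with eigenvalue 1 of multiplicity k and eigenvalue 0 of multiplicity d − k), and let E be any d×d real symmetric matrix. Let the eigenvalues of P + E be λ_1 ≥ ⋯ ≥ λ_d with corresponding orthonormal eigenvectors u_1, …, u_d, and let P̂ = Σ_{i=1}^{k} u_i u_iᵀ be the orthogonal projection onto a span of eigenvectors of P + E associated with its k largest eigenvalues. Then ‖P − P̂‖_op ≤ 2·‖E‖_op. -/

import Mathlib

open Matrix

/-- The Euclidean (ℓ²) norm of a vector in `ℝ^d`. -/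
noncomputable def euclNorm {d : ℕ} (x : Fin d → ℝ) : ℝ :=
  Real.sqrt (∑ j, x j ^ 2)

/-- The operator (spectral) norm of a `d×d` real matrix, with respect to the Euclidean norm. -/
noncomputable def matOpNorm {d : ℕ} (M : Matrix (Fin d) (Fin d) ℝ) : ℝ :=
  sSup {r : ℝ | ∃ v : Fin d → ℝ, euclNorm v ≤ 1 ∧ r = euclNorm (M.mulVec v)}

namespace Aux16

variable {d : ℕ}

lemma euclNorm_nonneg (x : Fin d → ℝ) : 0 ≤ euclNorm x := Real.sqrt_nonneg _

lemma dot_self_eq (v : Fin d → ℝ) : v ⬝ᵥ v = ∑ j, v j ^ 2 := by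
  simp [dotProduct, sq]

lemma dot_self_nonneg (v : Fin d → ℝ) : 0 ≤ v ⬝ᵥ v := by
  rw [dot_self_eq]; positivity

lemma euclNorm_eq_sqrt_dot (v : Fin d → ℝ) : euclNorm v = Real.sqrt (v ⬝ᵥ v) := by
  rw [euclNorm, dot_self_eq]

lemma euclNorm_sq (v : Fin d → ℝ) : euclNorm v ^ 2 = v ⬝ᵥ v := by
  rw [euclNorm_eq_sqrt_dot, Real.sq_sqrt (dot_self_nonneg v)]

lemma euclNorm_zero : euclNorm (0 : Fin d → ℝ) = 0 := by
  simp [euclNorm]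

lemma euclNorm_pos {v : Fin d → ℝ} (hv : v ≠ 0) : 0 < euclNorm v := by
  rcases (euclNorm_nonneg v).lt_or_eq with h | h
  · exact h
  · exfalso
    apply hv
    have h2 : v ⬝ᵥ v = 0 := by
      have := euclNorm_sq v
      rw [← h] at this
      simpa using this.symm
    rw [dot_self_eq] at h2
    funext j
    have hj : v j ^ 2 = 0 :=
      (Finset.sum_eq_zero_iff_of_nonneg (fun i _ => sq_nonneg (v i))).1 h2 j
        (Finset.mem_univ j)
    exact pow_eq_zero_iff (by norm_num) |>.1 hj

lemma dot_self_pos {v : Fin d → ℝ} (hv : v ≠ 0) : 0 < v ⬝ᵥ v := by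
  have := euclNorm_pos hv
  rw [← euclNorm_sq]; positivity

lemma cs (a b : Fin d → ℝ) : |a ⬝ᵥ b| ≤ euclNorm a * euclNorm b := by
  rw [abs_le]
  constructor
  · have h := Real.sum_mul_le_sqrt_mul_sqrt Finset.univ (fun j => -a j) b
    simp only [neg_mul, neg_sq, Finset.sum_neg_distrib] at h
    rw [euclNorm, euclNorm, dotProduct]
    linarith [h]
  · have := Real.sum_mul_le_sqrt_mul_sqrt Finset.univ a b
    rw [euclNorm, euclNorm, dotProduct]
    exact this

lemma euclNorm_smul (c : ℝ) (v : Fin d → ℝ) : euclNorm (c • v) = |c| * euclNorm v := by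
  rw [euclNorm, euclNorm]
  have : ∑ j, (c • v) j ^ 2 = c ^ 2 * ∑ j, v j ^ 2 := by
    rw [Finset.mul_sum]; congr 1; funext j; simp [mul_pow]
  rw [this, Real.sqrt_mul (sq_nonneg c), Real.sqrt_sq_eq_abs]

lemma euclNorm_add_le (a b : Fin d → ℝ) : euclNorm (a + b) ≤ euclNorm a + euclNorm b := by
  have h1 : (a + b) ⬝ᵥ (a + b) = a ⬝ᵥ a + 2 * (a ⬝ᵥ b) + b ⬝ᵥ b := by
    rw [add_dotProduct, dotProduct_add, dotProduct_add, dotProduct_comm b a]; ring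
  have h2 := cs a b
  have h3 := euclNorm_sq a
  have h4 := euclNorm_sq b
  have h5 := euclNorm_nonneg a
  have h6 := euclNorm_nonneg b
  have : (a + b) ⬝ᵥ (a + b) ≤ (euclNorm a + euclNorm b) ^ 2 := by
    rw [h1]
    have := abs_le.1 h2
    nlinarith
  rw [euclNorm_eq_sqrt_dot]
  calc Real.sqrt ((a + b) ⬝ᵥ (a + b)) ≤ Real.sqrt ((euclNorm a + euclNorm b) ^ 2) :=
        Real.sqrt_le_sqrt this
    _ = euclNorm a + euclNorm b := by
        rw [Real.sqrt_sq (by positivity)]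



lemma set_nonempty (M : Matrix (Fin d) (Fin d) ℝ) :
    {r : ℝ | ∃ v : Fin d → ℝ, euclNorm v ≤ 1 ∧ r = euclNorm (M.mulVec v)}.Nonempty := by
  refine ⟨euclNorm (M.mulVec 0), 0, ?_, rfl⟩
  rw [euclNorm_zero]; norm_num

lemma set_bddAbove (M : Matrix (Fin d) (Fin d) ℝ) :
    BddAbove {r : ℝ | ∃ v : Fin d → ℝ, euclNorm v ≤ 1 ∧ r = euclNorm (M.mulVec v)} := by
  refine ⟨Real.sqrt (∑ i, ∑ j, M i j ^ 2), ?_⟩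
  rintro r ⟨v, hv, rfl⟩
  have hv2 : ∑ j, v j ^ 2 ≤ 1 := by
    have h0 : (0:ℝ) ≤ ∑ j, v j ^ 2 := by positivity
    have h1 : Real.sqrt (∑ j, v j ^ 2) ≤ 1 := hv
    nlinarith [Real.sq_sqrt h0, Real.sqrt_nonneg (∑ j : Fin d, v j ^ 2)]
  rw [euclNorm]
  apply Real.sqrt_le_sqrt
  have : ∀ i, (M.mulVec v) i ^ 2 ≤ ∑ j, M i j ^ 2 := by
    intro i
    have hcs := Finset.sum_mul_sq_le_sq_mul_sq Finset.univ (fun j => M i j) v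
    have : (M.mulVec v) i = ∑ j, M i j * v j := rfl
    rw [this]
    calc (∑ j, M i j * v j) ^ 2 ≤ (∑ j, M i j ^ 2) * (∑ j, v j ^ 2) := hcs
      _ ≤ (∑ j, M i j ^ 2) * 1 := by
          apply mul_le_mul_of_nonneg_left hv2 (by positivity)
      _ = ∑ j, M i j ^ 2 := mul_one _
  exact Finset.sum_le_sum fun i _ => this i

lemma matOpNorm_nonneg (M : Matrix (Fin d) (Fin d) ℝ) : 0 ≤ matOpNorm M := by
  have h0 : euclNorm (M.mulVec 0) ∈
      {r : ℝ | ∃ v : Fin d → ℝ, euclNorm v ≤ 1 ∧ r = euclNorm (M.mulVec v)} :=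
    ⟨0, by rw [euclNorm_zero]; norm_num, rfl⟩
  exact le_trans (euclNorm_nonneg _) (le_csSup (set_bddAbove M) h0)

lemma matOpNorm_le {M : Matrix (Fin d) (Fin d) ℝ} {c : ℝ} (hc : 0 ≤ c)
    (h : ∀ v, euclNorm (M.mulVec v) ≤ c * euclNorm v) : matOpNorm M ≤ c := by
  apply Real.sSup_le _ hc
  rintro r ⟨v, hv, rfl⟩
  calc euclNorm (M.mulVec v) ≤ c * euclNorm v := h v
    _ ≤ c * 1 := mul_le_mul_of_nonneg_left hv hc
    _ = c := mul_one c

lemma mulVec_norm_le (M : Matrix (Fin d) (Fin d) ℝ) (v : Fin d → ℝ) :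
    euclNorm (M.mulVec v) ≤ matOpNorm M * euclNorm v := by
  by_cases hv : v = 0
  · subst hv
    simp only [Matrix.mulVec_zero, euclNorm_zero, mul_zero, le_refl]
  · have hnv := euclNorm_pos hv
    set w : Fin d → ℝ := (euclNorm v)⁻¹ • v with hw
    have hwn : euclNorm w = 1 := by
      rw [hw, euclNorm_smul, abs_of_nonneg (by positivity)]
      field_simp
    have hmem : euclNorm (M.mulVec w) ∈
        {r : ℝ | ∃ v : Fin d → ℝ, euclNorm v ≤ 1 ∧ r = euclNorm (M.mulVec v)} :=
      ⟨w, le_of_eq hwn, rfl⟩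
    have hle : euclNorm (M.mulVec w) ≤ matOpNorm M := le_csSup (set_bddAbove M) hmem
    have hvw : v = euclNorm v • w := by
      rw [hw, smul_smul]
      field_simp
      rw [one_smul]
    calc euclNorm (M.mulVec v) = euclNorm (M.mulVec (euclNorm v • w)) := by rw [← hvw]
      _ = euclNorm (euclNorm v • M.mulVec w) := by rw [Matrix.mulVec_smul]
      _ = euclNorm v * euclNorm (M.mulVec w) := by
          rw [euclNorm_smul, abs_of_nonneg hnv.le]
      _ ≤ euclNorm v * matOpNorm M := mul_le_mul_of_nonneg_left hle hnv.le
      _ = matOpNorm M * euclNorm v := mul_comm _ _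

lemma rayleigh (M : Matrix (Fin d) (Fin d) ℝ) (v : Fin d → ℝ) :
    |v ⬝ᵥ M.mulVec v| ≤ matOpNorm M * (v ⬝ᵥ v) := by
  calc |v ⬝ᵥ M.mulVec v| ≤ euclNorm v * euclNorm (M.mulVec v) := cs _ _
    _ ≤ euclNorm v * (matOpNorm M * euclNorm v) :=
        mul_le_mul_of_nonneg_left (mulVec_norm_le M v) (euclNorm_nonneg v)
    _ = matOpNorm M * (euclNorm v ^ 2) := by ring
    _ = matOpNorm M * (v ⬝ᵥ v) := by rw [euclNorm_sq]


lemma dotProduct_finset_sum (v : Fin d → ℝ) (S : Finset (Fin d)) (f : Fin d → Fin d → ℝ) :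
    v ⬝ᵥ (∑ j ∈ S, f j) = ∑ j ∈ S, v ⬝ᵥ f j := by
  simp only [dotProduct, Finset.sum_apply, Finset.mul_sum]
  rw [Finset.sum_comm]

lemma finset_sum_dotProduct (v : Fin d → ℝ) (S : Finset (Fin d)) (f : Fin d → Fin d → ℝ) :
    (∑ j ∈ S, f j) ⬝ᵥ v = ∑ j ∈ S, f j ⬝ᵥ v := by
  simp only [dotProduct, Finset.sum_apply, Finset.sum_mul]
  rw [Finset.sum_comm]

lemma mulVec_finset_sum (M : Matrix (Fin d) (Fin d) ℝ) (S : Finset (Fin d))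
    (f : Fin d → Fin d → ℝ) :
    M.mulVec (∑ j ∈ S, f j) = ∑ j ∈ S, M.mulVec (f j) := by
  have := map_sum M.mulVecLin f S
  simpa only [Matrix.mulVecLin_apply] using this

section ortho

variable {u : Fin d → Fin d → ℝ}
  (hortho : ∀ i j, u i ⬝ᵥ u j = if i = j then (1 : ℝ) else 0)

include hortho

lemma dot_single (i : Fin d) (S : Finset (Fin d)) (c : Fin d → ℝ) :
    u i ⬝ᵥ (∑ j ∈ S, c j • u j) = if i ∈ S then c i else 0 := by
  rw [dotProduct_finset_sum]
  have : ∀ j ∈ S, u i ⬝ᵥ (c j • u j) = if j = i then c i else 0 := by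
    intro j _
    rw [dotProduct_smul, hortho i j, smul_eq_mul]
    by_cases h : i = j
    · subst h; simp
    · simp [h, Ne.symm h]
  rw [Finset.sum_congr rfl this, Finset.sum_ite_eq' S i (fun _ => c i)]

lemma dot_sum_sum (S : Finset (Fin d)) (c e : Fin d → ℝ) :
    (∑ j ∈ S, c j • u j) ⬝ᵥ (∑ j ∈ S, e j • u j) = ∑ j ∈ S, c j * e j := by
  rw [finset_sum_dotProduct]
  apply Finset.sum_congr rfl
  intro j hj
  rw [smul_dotProduct, dot_single hortho j S e, if_pos hj, smul_eq_mul]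

lemma ortho_li : LinearIndependent ℝ u := by
  rw [Fintype.linearIndependent_iff]
  intro g hg i
  have h := congrArg (fun w => u i ⬝ᵥ w) hg
  rw [dot_single hortho i Finset.univ g, if_pos (Finset.mem_univ i)] at h
  simpa using h

lemma rep_of_mem_span (S : Finset (Fin d)) {x : Fin d → ℝ}
    (hx : x ∈ Submodule.span ℝ (u '' S)) :
    x = ∑ j ∈ S, (u j ⬝ᵥ x) • u j := by
  induction hx using Submodule.span_induction with
  | mem y hy =>
      obtain ⟨i, hiS, rfl⟩ := hy
      have : ∀ j ∈ S, (u j ⬝ᵥ u i) • u j = if j = i then u i else 0 := by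
        intro j _
        rw [hortho j i]
        by_cases h : j = i
        · simp [h]
        · simp [h]
      rw [Finset.sum_congr rfl this, Finset.sum_ite_eq' S i (fun _ => u i), if_pos (Finset.mem_coe.mp hiS)]
  | zero => simp
  | add y z hy hz ihy ihz =>
      conv_lhs => rw [ihy, ihz]
      rw [← Finset.sum_add_distrib]
      apply Finset.sum_congr rfl
      intro j _
      rw [dotProduct_add, add_smul]
  | smul a y hy ihy =>
      conv_lhs => rw [ihy]
      rw [Finset.smul_sum]
      apply Finset.sum_congr rfl
      intro j _
      simp [dotProduct_smul, smul_smul]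

lemma span_top (hd : True) : Submodule.span ℝ (Set.range u) = ⊤ := by
  apply (ortho_li hortho).span_eq_top_of_card_eq_finrank'
  simp [Module.finrank_pi]

lemma rep_univ (x : Fin d → ℝ) : x = ∑ j, (u j ⬝ᵥ x) • u j := by
  apply rep_of_mem_span hortho Finset.univ
  rw [Finset.coe_univ, Set.image_univ, span_top hortho trivial]
  trivial

lemma finrank_span_finset (S : Finset (Fin d)) :
    Module.finrank ℝ (Submodule.span ℝ (u '' S)) = S.card := by
  have hli : LinearIndependent ℝ (fun j : {x // x ∈ S} => u j) :=
    (ortho_li hortho).comp Subtype.val Subtype.val_injective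
  have hrange : Set.range (fun j : {x // x ∈ S} => u (↑j)) = u '' ↑S := by
    rw [show (fun j : {x // x ∈ S} => u (↑j)) = u ∘ Subtype.val from rfl,
      Set.range_comp, Subtype.range_coe]
  have := finrank_span_eq_card hli
  rw [hrange] at this
  rw [this, Fintype.card_coe]

end ortho

lemma exists_mem_inter (W1 W2 : Submodule ℝ (Fin d → ℝ))
    (h : d < Module.finrank ℝ W1 + Module.finrank ℝ W2) :
    ∃ x : Fin d → ℝ, x ≠ 0 ∧ x ∈ W1 ∧ x ∈ W2 := by
  have hsum := Submodule.finrank_sup_add_finrank_inf_eq W1 W2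
  have hsup : Module.finrank ℝ ↥(W1 ⊔ W2) ≤ d := by
    have := Submodule.finrank_le (W1 ⊔ W2)
    simpa [Module.finrank_pi] using this
  have hinf : 0 < Module.finrank ℝ ↥(W1 ⊓ W2) := by omega
  have : W1 ⊓ W2 ≠ ⊥ := by
    intro hbot
    rw [← Submodule.finrank_eq_zero (R := ℝ) (M := Fin d → ℝ)] at hbot
    omega
  obtain ⟨x, hx, hx0⟩ := Submodule.exists_mem_ne_zero_of_ne_bot this
  exact ⟨x, hx0, hx.1, hx.2⟩


lemma sum_mulVec (S : Finset (Fin d)) (A : Fin d → Matrix (Fin d) (Fin d) ℝ) (w : Fin d → ℝ) :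
    (∑ i ∈ S, A i).mulVec w = ∑ i ∈ S, (A i).mulVec w := by
  ext i0
  simp only [Matrix.mulVec, dotProduct, Finset.sum_apply, Finset.sum_mul]
  rw [Finset.sum_comm]
  apply Finset.sum_congr rfl
  intro j _
  rw [Matrix.sum_apply, Finset.sum_mul]

lemma vecMulVec_mulVec (w x v : Fin d → ℝ) :
    (Matrix.vecMulVec w x).mulVec v = (x ⬝ᵥ v) • w := by
  ext i
  simp only [Matrix.mulVec, Matrix.vecMulVec_apply, dotProduct, Pi.smul_apply, smul_eq_mul,
    Finset.sum_mul]
  apply Finset.sum_congr rfl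
  intros; ring

lemma proj_dot {P : Matrix (Fin d) (Fin d) ℝ} (hPsymm : P.IsSymm) (hPproj : P * P = P)
    (x : Fin d → ℝ) : 0 ≤ x ⬝ᵥ P.mulVec x ∧ x ⬝ᵥ P.mulVec x ≤ x ⬝ᵥ x := by
  set y := P.mulVec x with hy
  have hyy : y ⬝ᵥ y = x ⬝ᵥ y := by
    have h1 : y ⬝ᵥ y = (y ᵥ* P) ⬝ᵥ x := by
      rw [hy, dotProduct_mulVec]
    have h2 : y ᵥ* P = y := by
      rw [← Matrix.mulVec_transpose, hPsymm.eq, hy, Matrix.mulVec_mulVec, hPproj]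
    rw [h1, h2, dotProduct_comm]
  constructor
  · rw [← hyy]; exact dot_self_nonneg y
  · have hcs := cs x y
    have h3 := euclNorm_sq x
    have h4 := euclNorm_sq y
    have h5 := euclNorm_nonneg x
    have h6 := euclNorm_nonneg y
    have habs := abs_le.1 hcs
    nlinarith

end Aux16

open Aux16 in
/-- Distortion of the rank-`k` spectral truncation: let `P` be a `d×d` symmetric orthogonal
projection of rank `k` and `E` any symmetric matrix. If `u_1,…,u_d` is an orthonormal
eigenbasis of `P + E` with eigenvalues sorted in decreasing order, and
`P̂ = Σ_{i<k} u_i u_iᵀ` is the projection onto the span of eigenvectors of the `k` largest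
eigenvalues, then `‖P − P̂‖_op ≤ 2·‖E‖_op`. -/
theorem stmt16 (d k : ℕ) (P Emat : Matrix (Fin d) (Fin d) ℝ)
    (hPsymm : P.IsSymm) (hPproj : P * P = P) (hPrank : P.rank = k)
    (hEsymm : Emat.IsSymm)
    (lam : Fin d → ℝ) (u : Fin d → Fin d → ℝ)
    (hlam : ∀ i j : Fin d, i ≤ j → lam j ≤ lam i)
    (hortho : ∀ i j, u i ⬝ᵥ u j = if i = j then (1 : ℝ) else 0)
    (heig : ∀ i, (P + Emat).mulVec (u i) = lam i • u i) :
    matOpNorm (P - ∑ i ∈ Finset.univ.filter (fun i : Fin d => (i : ℕ) < k),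
        vecMulVec (u i) (u i)) ≤ 2 * matOpNorm Emat := by
  classical
  set cE := matOpNorm Emat with hcEdef
  have hcE : 0 ≤ cE := matOpNorm_nonneg Emat
  have hsplit : ∀ x : Fin d → ℝ, x ⬝ᵥ (P + Emat).mulVec x
      = x ⬝ᵥ P.mulVec x + x ⬝ᵥ Emat.mulVec x := by
    intro x; rw [Matrix.add_mulVec, dotProduct_add]
  have hray : ∀ x : Fin d → ℝ, |x ⬝ᵥ Emat.mulVec x| ≤ cE * (x ⬝ᵥ x) :=
    fun x => rayleigh Emat x
  have huu : ∀ i, u i ⬝ᵥ u i = 1 := fun i => by rw [hortho i i]; simp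
  have heigdot : ∀ i, u i ⬝ᵥ (P + Emat).mulVec (u i) = lam i := by
    intro i
    rw [heig i, dotProduct_smul, huu i]
    simp
  -- easy Weyl bounds
  have b1 : ∀ i, lam i ≤ 1 + cE := by
    intro i
    have h := heigdot i
    rw [hsplit] at h
    have hp := (proj_dot hPsymm hPproj (u i)).2
    have he := (abs_le.1 (hray (u i))).2
    rw [huu i] at hp he
    linarith
  have b2 : ∀ i, -cE ≤ lam i := by
    intro i
    have h := heigdot i
    rw [hsplit] at h
    have hp := (proj_dot hPsymm hPproj (u i)).1
    have he := (abs_le.1 (hray (u i))).1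
    rw [huu i] at he
    linarith
  -- rank facts
  have hrange : Module.finrank ℝ (LinearMap.range P.mulVecLin) = k := by
    rw [← hPrank]; rfl
  have hrn : Module.finrank ℝ (LinearMap.range P.mulVecLin)
      + Module.finrank ℝ (LinearMap.ker P.mulVecLin) = d := by
    have := LinearMap.finrank_range_add_finrank_ker P.mulVecLin
    simpa [Module.finrank_pi] using this
  have hker : Module.finrank ℝ (LinearMap.ker P.mulVecLin) = d - k := by omega
  have hkd : k ≤ d := by omega
  -- hard Weyl bounds
  have b3 : ∀ i : Fin d, k ≤ (i : ℕ) → lam i ≤ cE := by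
    intro i hi
    obtain ⟨x, hx0, hxW1, hxW2⟩ := exists_mem_inter
      (Submodule.span ℝ (u '' ↑(Finset.Iic i))) (LinearMap.ker P.mulVecLin)
      (by
        rw [finrank_span_finset hortho (Finset.Iic i), Fin.card_Iic, hker]
        have := i.isLt
        omega)
    set c : Fin d → ℝ := fun j => u j ⬝ᵥ x with hcdef
    have hrep : x = ∑ j ∈ Finset.Iic i, c j • u j := rep_of_mem_span hortho (Finset.Iic i) hxW1
    have hxx : x ⬝ᵥ x = ∑ j ∈ Finset.Iic i, c j * c j := by
      have h := dot_sum_sum hortho (Finset.Iic i) c c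
      rwa [← hrep] at h
    have hPx : P.mulVec x = 0 := by
      have h := hxW2
      rwa [LinearMap.mem_ker, Matrix.mulVecLin_apply] at h
    have hMx : (P + Emat).mulVec x = ∑ j ∈ Finset.Iic i, (c j * lam j) • u j := by
      conv_lhs => rw [hrep]
      rw [mulVec_finset_sum]
      apply Finset.sum_congr rfl
      intro j _
      rw [Matrix.mulVec_smul, heig j, smul_smul]
    have hq : x ⬝ᵥ (P + Emat).mulVec x = ∑ j ∈ Finset.Iic i, c j * (c j * lam j) := by
      rw [hMx]
      conv_lhs => rw [hrep]
      exact dot_sum_sum hortho (Finset.Iic i) c _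
    have hqs : x ⬝ᵥ (P + Emat).mulVec x ≤ cE * (x ⬝ᵥ x) := by
      have he := (abs_le.1 (hray x)).2
      rw [hsplit, hPx]
      simpa using he
    have hlow : lam i * (x ⬝ᵥ x) ≤ x ⬝ᵥ (P + Emat).mulVec x := by
      rw [hq, hxx, Finset.mul_sum]
      apply Finset.sum_le_sum
      intro j hj
      have hj' : j ≤ i := Finset.mem_Iic.mp hj
      have hji := hlam j i hj'
      nlinarith [sq_nonneg (c j)]
    exact le_of_mul_le_mul_right (hlow.trans hqs) (dot_self_pos hx0)
  have b4 : ∀ i : Fin d, (i : ℕ) < k → 1 - cE ≤ lam i := by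
    intro i hi
    obtain ⟨x, hx0, hxW1, hxW2⟩ := exists_mem_inter
      (Submodule.span ℝ (u '' ↑(Finset.Ici i))) (LinearMap.range P.mulVecLin)
      (by
        rw [finrank_span_finset hortho (Finset.Ici i), Fin.card_Ici, hrange]
        have := i.isLt
        omega)
    set c : Fin d → ℝ := fun j => u j ⬝ᵥ x with hcdef
    have hrep : x = ∑ j ∈ Finset.Ici i, c j • u j := rep_of_mem_span hortho (Finset.Ici i) hxW1
    have hxx : x ⬝ᵥ x = ∑ j ∈ Finset.Ici i, c j * c j := by
      have h := dot_sum_sum hortho (Finset.Ici i) c c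
      rwa [← hrep] at h
    have hPx : P.mulVec x = x := by
      obtain ⟨y, hy⟩ := LinearMap.mem_range.mp hxW2
      rw [Matrix.mulVecLin_apply] at hy
      calc P.mulVec x = P.mulVec (P.mulVec y) := by rw [hy]
        _ = (P * P).mulVec y := Matrix.mulVec_mulVec y P P
        _ = P.mulVec y := by rw [hPproj]
        _ = x := hy
    have hMx : (P + Emat).mulVec x = ∑ j ∈ Finset.Ici i, (c j * lam j) • u j := by
      conv_lhs => rw [hrep]
      rw [mulVec_finset_sum]
      apply Finset.sum_congr rfl
      intro j _
      rw [Matrix.mulVec_smul, heig j, smul_smul]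
    have hq : x ⬝ᵥ (P + Emat).mulVec x = ∑ j ∈ Finset.Ici i, c j * (c j * lam j) := by
      rw [hMx]
      conv_lhs => rw [hrep]
      exact dot_sum_sum hortho (Finset.Ici i) c _
    have hqs : (1 - cE) * (x ⬝ᵥ x) ≤ x ⬝ᵥ (P + Emat).mulVec x := by
      have he := (abs_le.1 (hray x)).1
      rw [hsplit, hPx]
      linarith
    have hup : x ⬝ᵥ (P + Emat).mulVec x ≤ lam i * (x ⬝ᵥ x) := by
      rw [hq, hxx, Finset.mul_sum]
      apply Finset.sum_le_sum
      intro j hj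
      have hj' : i ≤ j := Finset.mem_Ici.mp hj
      have hji := hlam i j hj'
      nlinarith [sq_nonneg (c j)]
    exact le_of_mul_le_mul_right (hqs.trans hup) (dot_self_pos hx0)
  have key : ∀ i : Fin d, |lam i - (if (i : ℕ) < k then (1:ℝ) else 0)| ≤ cE := by
    intro i
    by_cases h : (i : ℕ) < k
    · rw [if_pos h, abs_le]
      exact ⟨by linarith [b4 i h], by linarith [b1 i]⟩
    · rw [if_neg h, sub_zero, abs_le]
      push_neg at h
      exact ⟨b2 i, b3 i h⟩
  -- final assembly
  set F := Finset.univ.filter (fun i : Fin d => (i : ℕ) < k) with hF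
  set Phat := ∑ i ∈ F, vecMulVec (u i) (u i) with hPhatdef
  apply matOpNorm_le (by linarith : (0:ℝ) ≤ 2 * cE)
  intro v
  set c : Fin d → ℝ := fun i => u i ⬝ᵥ v with hcdef
  have hrep : v = ∑ j, c j • u j := rep_univ hortho v
  have hvv : v ⬝ᵥ v = ∑ j, c j * c j := by
    have h := dot_sum_sum hortho Finset.univ c c
    rwa [← hrep] at h
  have hPhatu : ∀ j : Fin d, Phat.mulVec (u j) = (if (j : ℕ) < k then (1:ℝ) else 0) • u j := by
    intro j
    rw [hPhatdef, sum_mulVec]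
    have hterm : ∀ i ∈ F, (vecMulVec (u i) (u i)).mulVec (u j)
        = if i = j then u j else 0 := by
      intro i _
      rw [vecMulVec_mulVec, hortho i j]
      by_cases h : i = j
      · subst h; simp
      · simp [h]
    rw [Finset.sum_congr rfl hterm, Finset.sum_ite_eq' F j (fun _ => u j)]
    by_cases h : (j : ℕ) < k
    · rw [if_pos (by simp [hF, h]), if_pos h, one_smul]
    · rw [if_neg (by simp [hF, h]), if_neg h, zero_smul]
  have hXv : (P + Emat - Phat).mulVec v
      = ∑ j, (c j * (lam j - (if (j : ℕ) < k then (1:ℝ) else 0))) • u j := by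
    rw [Matrix.sub_mulVec]
    conv_lhs => rw [hrep]
    rw [mulVec_finset_sum, mulVec_finset_sum, ← Finset.sum_sub_distrib]
    apply Finset.sum_congr rfl
    intro j _
    rw [Matrix.mulVec_smul, Matrix.mulVec_smul, heig j, hPhatu j, smul_smul, smul_smul,
      ← sub_smul]
    congr 1
    ring
  have hnorm1 : euclNorm ((P + Emat - Phat).mulVec v) ≤ cE * euclNorm v := by
    have hdot : ((P + Emat - Phat).mulVec v) ⬝ᵥ ((P + Emat - Phat).mulVec v)
        = ∑ j, (c j * (lam j - (if (j : ℕ) < k then (1:ℝ) else 0)))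
            * (c j * (lam j - (if (j : ℕ) < k then (1:ℝ) else 0))) := by
      rw [hXv]
      exact dot_sum_sum hortho Finset.univ _ _
    rw [euclNorm_eq_sqrt_dot, hdot]
    have hle : ∑ j, (c j * (lam j - (if (j : ℕ) < k then (1:ℝ) else 0)))
            * (c j * (lam j - (if (j : ℕ) < k then (1:ℝ) else 0)))
        ≤ cE ^ 2 * (v ⬝ᵥ v) := by
      rw [hvv, Finset.mul_sum]
      apply Finset.sum_le_sum
      intro j _
      have h1 := abs_le.1 (key j)
      have hsq : (lam j - (if (j : ℕ) < k then (1:ℝ) else 0)) ^ 2 ≤ cE ^ 2 :=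
        sq_le_sq' h1.1 h1.2
      nlinarith [sq_nonneg (c j)]
    calc Real.sqrt (∑ j, (c j * (lam j - (if (j : ℕ) < k then (1:ℝ) else 0)))
            * (c j * (lam j - (if (j : ℕ) < k then (1:ℝ) else 0))))
        ≤ Real.sqrt (cE ^ 2 * (v ⬝ᵥ v)) := Real.sqrt_le_sqrt hle
      _ = cE * Real.sqrt (v ⬝ᵥ v) := by
          rw [Real.sqrt_mul (sq_nonneg cE), Real.sqrt_sq hcE]
      _ = cE * euclNorm v := by rw [euclNorm_eq_sqrt_dot]
  have hsplitA : (P - Phat).mulVec v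
      = (P + Emat - Phat).mulVec v + (-1 : ℝ) • (Emat.mulVec v) := by
    have hmat : P - Phat = (P + Emat - Phat) - Emat := by abel
    rw [hmat, Matrix.sub_mulVec]
    simp [sub_eq_add_neg]
  calc euclNorm ((P - Phat).mulVec v)
      = euclNorm ((P + Emat - Phat).mulVec v + (-1 : ℝ) • Emat.mulVec v) := by rw [hsplitA]
    _ ≤ euclNorm ((P + Emat - Phat).mulVec v) + euclNorm ((-1 : ℝ) • Emat.mulVec v) :=
        euclNorm_add_le _ _
    _ = euclNorm ((P + Emat - Phat).mulVec v) + euclNorm (Emat.mulVec v) := by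
        rw [euclNorm_smul]; norm_num
    _ ≤ cE * euclNorm v + cE * euclNorm v := add_le_add hnorm1 (mulVec_norm_le Emat v)
    _ = 2 * cE * euclNorm v := by ring
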